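/- Let s be an X-AR word. Then the factor complexity of s is linearly upper bounded: there exists an integer n₀ such that for all n ≥ n₀, p_s(n) ≤ 2·card(X)·n − card(X). -/

import Mathlib

open List

/-- Right palindromic closure: `w⁺ = u Q u~` where `Q` is the longest palindromic
suffix of `w = uQ`; equivalently the shortest palindrome having `w` as a prefix. -/
noncomputable def palClosure {A : Type*} (w : List A) : List A :=
  letI : DecidablePred fun k => (w.drop k).reverse = w.drop k :=
    fun _ => Classical.propDecidable _
  w ++ (w.take (Nat.find (⟨w.length, by simp⟩ :
    ∃ k, (w.drop k).reverse = w.drop k))).reverse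

/-- The palindromization map `ψ_X` relative to a code `X`, evaluated on the
(unique) `X`-factorization `l = [x₁, …, xₙ]` of a word of `X*`. -/
noncomputable def psiList {A : Type*} (l : List (List A)) : List A :=
  l.foldl (fun p x => palClosure (p ++ x)) []

/-- The (usual) palindromization map `ψ` on words, letter by letter. -/
noncomputable def psiWord {A : Type*} (w : List A) : List A :=
  w.foldl (fun p a => palClosure (p ++ [a])) []

/-- `X` is a code: nonempty words with unique factorization over `X`. -/
def IsCode {A : Type*} (X : Set (List A)) : Prop :=
  (∀ x ∈ X, x ≠ []) ∧
  ∀ l l' : List (List A), (∀ w ∈ l, w ∈ X) → (∀ w ∈ l', w ∈ X) →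
    l.flatten = l'.flatten → l = l'

/-- `X` is a prefix code: nonempty words, none a proper prefix of another. -/
def IsPrefixCode {A : Type*} (X : Set (List A)) : Prop :=
  (∀ x ∈ X, x ≠ []) ∧ ∀ x ∈ X, ∀ y ∈ X, x <+: y → x = y

/-- `X` is a maximal prefix code over `A`. -/
def IsMaximalPrefixCode {A : Type*} (X : Set (List A)) : Prop :=
  IsPrefixCode X ∧ ∀ Y : Set (List A), IsPrefixCode Y → X ⊆ Y → X = Y

/-- `w ∈ X*`. -/
def InStar {A : Type*} (X : Set (List A)) (w : List A) : Prop :=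
  ∃ l : List (List A), (∀ u ∈ l, u ∈ X) ∧ l.flatten = w

/-- The finite word `w` is a prefix of the infinite word `s`. -/
def PrefixOfInf {A : Type*} (w : List A) (s : ℕ → A) : Prop :=
  ∀ i : ℕ, ∀ h : i < w.length, w.get ⟨i, h⟩ = s i

/-- The finite word `w` is a factor of the infinite word `s`. -/
def FactorOfInf {A : Type*} (w : List A) (s : ℕ → A) : Prop :=
  ∃ i : ℕ, w = List.ofFn fun k : Fin w.length => s (i + k.1)

/-- `X` has finite deciphering delay. -/
def FiniteDecipheringDelay {A : Type*} (X : Set (List A)) : Prop :=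
  ∃ k : ℕ, ∀ x ∈ X, ∀ x' ∈ X,
    (∃ (l l' : List (List A)) (r : List A),
      (∀ w ∈ l, w ∈ X) ∧ l.length = k ∧ (∀ w ∈ l', w ∈ X) ∧
      x ++ l.flatten ++ r = x' ++ l'.flatten) → x = x'

/-- The sequence `y = y₁y₂⋯ ∈ X^ω` is alternating. -/
def Alternating {A : Type*} (y : ℕ → List A) : Prop :=
  ∃ a b : A, a ≠ b ∧ ∃ (lam : List A) (idx : ℕ → ℕ), StrictMono idx ∧
    ∀ k : ℕ, (lam ++ [a]) <+: y (idx (2 * k)) ∧ (lam ++ [b]) <+: y (idx (2 * k + 1))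

/-- The infinite word `s` is ultimately periodic. -/
def UltimatelyPeriodic {A : Type*} (s : ℕ → A) : Prop :=
  ∃ p : ℕ, 0 < p ∧ ∃ N : ℕ, ∀ n ≥ N, s (n + p) = s n

/-- The infinite word `s` is uniformly recurrent: every factor occurs in every
sufficiently long factor of `s`. -/
def UniformlyRecurrent {A : Type*} (s : ℕ → A) : Prop :=
  ∀ w : List A, FactorOfInf w s →
    ∃ N : ℕ, ∀ i : ℕ, w <:+: List.ofFn fun k : Fin N => s (i + k.1)

/-- Factor complexity of the infinite word `s`. -/
noncomputable def complexity {A : Type*} (s : ℕ → A) (n : ℕ) : ℕ :=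
  {u : List A | u.length = n ∧ FactorOfInf u s}.ncard

/-- A word `w` is primitive if it is not a proper power. -/
def Primitive {A : Type*} (w : List A) : Prop :=
  ∀ (v : List A) (n : ℕ), 1 < n → w ≠ (List.replicate n v).flatten
section St15Aux

variable {A : Type*}

/-- Canonical window of the infinite word `s`. -/
def st15win (s : ℕ → A) (i n : ℕ) : List A := List.ofFn fun k : Fin n => s (i + k.1)

@[simp] lemma st15win_length (s : ℕ → A) (i n : ℕ) : (st15win s i n).length = n := by
  simp [st15win]

@[simp] lemma st15win_getElem (s : ℕ → A) (i n j : ℕ) (h : j < (st15win s i n).length) :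
    (st15win s i n)[j] = s (i + j) := by
  simp [st15win]

/-- The index of the longest palindromic suffix used in `palClosure`. -/
noncomputable def st15c (w : List A) : ℕ :=
  letI : DecidablePred fun k => (w.drop k).reverse = w.drop k :=
    fun _ => Classical.propDecidable _
  Nat.find (⟨w.length, by simp⟩ : ∃ k, (w.drop k).reverse = w.drop k)

lemma palClosure_eq (w : List A) : palClosure w = w ++ (w.take (st15c w)).reverse := rfl

lemma st15c_spec (w : List A) : (w.drop (st15c w)).reverse = w.drop (st15c w) := by
  letI : DecidablePred fun k => (w.drop k).reverse = w.drop k :=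
    fun _ => Classical.propDecidable _
  exact Nat.find_spec (⟨w.length, by simp⟩ : ∃ k, (w.drop k).reverse = w.drop k)

lemma st15c_min (w : List A) {j : ℕ} (h : (w.drop j).reverse = w.drop j) : st15c w ≤ j := by
  letI : DecidablePred fun k => (w.drop k).reverse = w.drop k :=
    fun _ => Classical.propDecidable _
  exact Nat.find_min' (⟨w.length, by simp⟩ : ∃ k, (w.drop k).reverse = w.drop k) h

lemma st15c_le (w : List A) : st15c w ≤ w.length := st15c_min w (by simp)

lemma palClosure_length (w : List A) : (palClosure w).length = w.length + st15c w := by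
  rw [palClosure_eq]
  simp [List.length_take, Nat.min_eq_left (st15c_le w)]

lemma palClosure_prefix (w : List A) : w <+: palClosure w := ⟨_, (palClosure_eq w).symm⟩

lemma palClosure_reverse (w : List A) : (palClosure w).reverse = palClosure w := by
  have hd := st15c_spec w
  rw [palClosure_eq]
  set t := w.take (st15c w) with htdef
  set d := w.drop (st15c w) with hddef
  have hw : t ++ d = w := List.take_append_drop _ _
  rw [← hw]
  simp [List.reverse_append, hd, List.append_assoc]

/-- The sequence of palindromic prefixes `u_m = ψ_X(y_1 ⋯ y_m)`. -/
noncomputable def st15u (y : ℕ → List A) : ℕ → List A :=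
  fun m => psiList (List.ofFn fun i : Fin m => y i.1)

lemma st15u_def (y : ℕ → List A) (m : ℕ) :
    st15u y m = psiList (List.ofFn fun i : Fin m => y i.1) := rfl

@[simp] lemma st15u_zero (y : ℕ → List A) : st15u y 0 = [] := rfl

lemma st15u_succ (y : ℕ → List A) (m : ℕ) :
    st15u y (m + 1) = palClosure (st15u y m ++ y m) := by
  unfold st15u psiList
  rw [List.ofFn_succ']
  simp [List.concat_eq_append, List.foldl_concat]

lemma st15u_pal (y : ℕ → List A) (m : ℕ) : (st15u y m).reverse = st15u y m := by
  cases m with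
  | zero => rfl
  | succ m => rw [st15u_succ]; exact palClosure_reverse _

lemma st15u_append_prefix (y : ℕ → List A) (m : ℕ) :
    (st15u y m ++ y m) <+: st15u y (m + 1) := by
  rw [st15u_succ]; exact palClosure_prefix _

lemma st15u_prefix_succ (y : ℕ → List A) (m : ℕ) : st15u y m <+: st15u y (m + 1) :=
  (List.prefix_append _ _).trans (st15u_append_prefix y m)

lemma st15u_prefix_mono (y : ℕ → List A) {a b : ℕ} (hab : a ≤ b) :
    st15u y a <+: st15u y b := by
  induction b, hab using Nat.le_induction with
  | base => exact List.prefix_refl _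
  | succ b hb ih => exact ih.trans (st15u_prefix_succ y b)

lemma st15u_length_succ (y : ℕ → List A) (m : ℕ) :
    (st15u y (m + 1)).length = (st15u y m).length + (y m).length + st15c (st15u y m ++ y m) := by
  rw [st15u_succ, palClosure_length]
  simp

lemma st15_pref_suf {l P : List A} (h : l <+: P) (hP : P.reverse = P) (hl : l.reverse = l) :
    l <:+ P := by
  obtain ⟨t, ht⟩ := h
  refine ⟨t.reverse, ?_⟩
  calc t.reverse ++ l = t.reverse ++ l.reverse := by rw [hl]
    _ = (l ++ t).reverse := List.reverse_append.symm
    _ = P.reverse := by rw [ht]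
    _ = P := hP

lemma st15_suf_app {a b c : List A} (h : a <:+ b) : a ++ c <:+ b ++ c := by
  obtain ⟨t, ht⟩ := h
  exact ⟨t, by rw [← ht, List.append_assoc]⟩

/-- Key lemma: if the code word `y m` already occurred at an earlier step `j`,
then `(y m)~ · u_j · (y m)` is a palindromic suffix of `u_m · y m`, so the
longest palindromic suffix there is long. -/
lemma st15_QL (y : ℕ → List A) {j m : ℕ} (hjm : j < m) (hyy : y j = y m) :
    st15c (st15u y m ++ y m) + ((st15u y j).length + 2 * (y m).length)
      ≤ (st15u y m).length + (y m).length := by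
  have hpal_j : (st15u y j).reverse = st15u y j := st15u_pal y j
  have h1 : st15u y (j + 1) <:+ st15u y m :=
    st15_pref_suf (st15u_prefix_mono y hjm) (st15u_pal y m) (st15u_pal y (j + 1))
  have h2 : ((y m).reverse ++ st15u y j) <:+ st15u y (j + 1) := by
    obtain ⟨t, ht⟩ := st15u_append_prefix y j
    rw [hyy] at ht
    refine ⟨t.reverse, ?_⟩
    calc t.reverse ++ ((y m).reverse ++ st15u y j)
        = (st15u y j ++ y m ++ t).reverse := by
          simp [List.reverse_append, hpal_j, List.append_assoc]
      _ = (st15u y (j + 1)).reverse := by rw [ht]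
      _ = st15u y (j + 1) := st15u_pal y (j + 1)
  have h3 : ((y m).reverse ++ st15u y j) ++ y m <:+ (st15u y m ++ y m) :=
    st15_suf_app (h2.trans h1)
  have hvpal : (((y m).reverse ++ st15u y j) ++ y m).reverse
      = ((y m).reverse ++ st15u y j) ++ y m := by
    simp [List.reverse_append, hpal_j, List.append_assoc]
  obtain ⟨t, ht⟩ := h3
  have hdrop : (st15u y m ++ y m).drop t.length = ((y m).reverse ++ st15u y j) ++ y m := by
    rw [← ht, List.drop_left]
  have hc : st15c (st15u y m ++ y m) ≤ t.length := by
    refine st15c_min _ ?_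
    rw [hdrop, hvpal]
  have hlen : t.length + ((((y m).reverse ++ st15u y j) ++ y m)).length
      = (st15u y m ++ y m).length := by
    rw [← ht]; simp
  simp only [List.length_append, List.length_reverse] at hlen
  omega

/-- Mirror lemma: windows inside a palindromic prefix region reverse nicely. -/
lemma st15_mir {s : ℕ → A} {N : ℕ} (hp : ∀ j, j < N → s j = s (N - 1 - j))
    {i n : ℕ} (h : i + n ≤ N) :
    (st15win s i n).reverse = st15win s (N - n - i) n := by
  apply List.ext_getElem (by simp)
  intro j h1 h2
  simp only [List.length_reverse, st15win_length] at h1 h2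
  rw [List.getElem_reverse]
  rw [st15win_getElem _ _ _ _ (by simp; omega), st15win_getElem _ _ _ _ (by simp; omega)]
  rw [hp (i + ((st15win s i n).length - 1 - j)) (by simp; omega)]
  congr 1
  simp only [st15win_length]
  omega

end St15Aux

/-- The factor complexity of an `X`-AR word `s` satisfies
`p_s(n) ≤ 2·card(X)·n − card(X)` for all sufficiently large `n`. -/
theorem stmt15 {A : Type*} [Fintype A] (hd : 1 < Fintype.card A)
    (X : Set (List A)) (hfin : X.Finite) (hX : IsMaximalPrefixCode X)
    (y : ℕ → List A) (hy : ∀ i, y i ∈ X)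
    (hpers : ∀ x ∈ X, ∀ N : ℕ, ∃ i ≥ N, y i = x)
    (s : ℕ → A)
    (hs : ∀ n : ℕ, PrefixOfInf (psiList (List.ofFn fun i : Fin n => y i.1)) s) :
    ∃ n₀ : ℕ, ∀ n : ℕ, n ≥ n₀ →
      (complexity s n : ℤ) ≤ 2 * (X.ncard : ℤ) * n - (X.ncard : ℤ) := by
  classical
  have hPC : IsPrefixCode X := hX.1
  have hne : ∀ i, y i ≠ [] := fun i => hPC.1 _ (hy i)
  -- basic data
  set Xf : Finset (List A) := hfin.toFinset with hXf
  set k : ℕ := X.ncard with hk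
  set L : ℕ := Xf.sup List.length with hL
  have hyXf : ∀ m, y m ∈ Xf := fun m => hfin.mem_toFinset.mpr (hy m)
  have hyL : ∀ m, (y m).length ≤ L := fun m => Finset.le_sup (hyXf m)
  have hkXf : Xf.card = k := by rw [hk, ← Set.ncard_coe_finset, hXf, hfin.coe_toFinset]
  -- k ≥ 2
  have hnt : Nontrivial A := Fintype.one_lt_card_iff_nontrivial.mp hd
  have hk2 : 2 ≤ k := by
    have hXne : X.Nonempty := by
      by_contra h0
      rw [Set.not_nonempty_iff_eq_empty] at h0
      obtain ⟨a⟩ : Nonempty A := inferInstance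
      have hpc : IsPrefixCode ({[a]} : Set (List A)) := by
        constructor
        · intro x hx; simp at hx; subst hx; simp
        · intro x hx z hz _; simp at hx hz; rw [hx, hz]
      have := hX.2 {[a]} hpc (by rw [h0]; exact Set.empty_subset _)
      rw [h0] at this
      exact absurd this.symm (by simp)
    obtain ⟨w, hw⟩ := hXne
    have hw2 : ∃ v ∈ X, v ≠ w := by
      by_contra hallw
      push_neg at hallw
      have hXw : X = {w} := Set.eq_singleton_iff_unique_mem.mpr ⟨hw, hallw⟩
      obtain ⟨c, wt, hwc⟩ := List.exists_cons_of_ne_nil (hPC.1 w hw)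
      obtain ⟨a, ha⟩ := exists_ne c
      have haw : ¬ (([a] : List A) <+: w) := by
        rintro ⟨t, ht⟩
        rw [hwc] at ht
        simp only [List.singleton_append, List.cons.injEq] at ht
        exact ha ht.1
      have hwa : ¬ (w <+: ([a] : List A)) := by
        rintro ⟨t, ht⟩
        rw [hwc] at ht
        simp only [List.cons_append, List.cons.injEq] at ht
        exact ha ht.1.symm
      have hpc : IsPrefixCode (insert [a] X) := by
        constructor
        · intro x hx
          rcases Set.mem_insert_iff.mp hx with h | h
          · subst h; simp
          · exact hPC.1 x h
        · intro x hx z hz hxz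
          rcases Set.mem_insert_iff.mp hx with h1 | h1 <;>
            rcases Set.mem_insert_iff.mp hz with h2 | h2
          · rw [h1, h2]
          · exfalso; rw [hXw] at h2; simp at h2; rw [h1, h2] at hxz; exact haw hxz
          · exfalso; rw [hXw] at h1; simp at h1; rw [h1, h2] at hxz; exact hwa hxz
          · exact hPC.2 x h1 z h2 hxz
      have hXY := hX.2 _ hpc (Set.subset_insert _ _)
      have hmem : [a] ∈ X := by rw [hXY]; exact Set.mem_insert _ _
      rw [hXw] at hmem
      simp only [Set.mem_singleton_iff] at hmem
      exact haw (hmem ▸ List.prefix_refl _)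
    obtain ⟨v, hv, hvw⟩ := hw2
    calc 2 = ({v, w} : Set (List A)).ncard := (Set.ncard_pair hvw).symm
      _ ≤ X.ncard := Set.ncard_le_ncard (Set.insert_subset_iff.mpr ⟨hv, Set.singleton_subset_iff.mpr hw⟩) hfin
  -- ## The palindromic prefixes u_m and their lengths
  set Nf : ℕ → ℕ := fun m => (st15u y m).length with hNf
  set cf : ℕ → ℕ := fun m => st15c (st15u y m ++ y m) with hcf
  have hNsucc : ∀ m, Nf (m + 1) = Nf m + (y m).length + cf m := fun m => st15u_length_succ y m
  have hcle : ∀ m, cf m ≤ Nf m + (y m).length := by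
    intro m
    have := st15c_le (st15u y m ++ y m)
    simpa using this
  have hN0 : Nf 0 = 0 := by simp [hNf]
  have hNge : ∀ m, m ≤ Nf m := by
    intro m
    induction m with
    | zero => omega
    | succ m ih =>
      have h1 := hNsucc m
      have h2 : 1 ≤ (y m).length := List.length_pos_iff.mpr (hne m)
      omega
  have hNmono : ∀ a b, a ≤ b → Nf a ≤ Nf b := by
    intro a b hab
    induction b, hab using Nat.le_induction with
    | base => exact le_rfl
    | succ b hb ih => have := hNsucc b; have := hcle b; omega
  -- u_m is a prefix of s (element-wise)
  have hgetu : ∀ m, ∀ j, ∀ hj : j < (st15u y m).length, (st15u y m)[j] = s j := by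
    intro m j hj
    exact hs m j hj
  -- mirror property of s below Nf m
  have hmir : ∀ m j, j < Nf m → s j = s (Nf m - 1 - j) := by
    intro m j hj
    have hlen : (st15u y m).length = Nf m := rfl
    rw [← hlen] at hj ⊢
    have hj2 : (st15u y m).length - 1 - j < (st15u y m).length := by omega
    have hpal := st15u_pal y m
    have h5 := List.getElem_of_eq hpal (show j < (st15u y m).reverse.length by simpa using hj)
    have h4 := List.getElem_reverse (show j < (st15u y m).reverse.length by simpa using hj)
    rw [← hgetu m j hj, ← hgetu m _ hj2, ← h5, h4]
  -- letters of y m sit at positions Nf m + t of s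
  have hyx : ∀ m t, ∀ ht : t < (y m).length, s (Nf m + t) = (y m)[t] := by
    intro m t ht
    have hlen : (st15u y m).length = Nf m := rfl
    have hpre : (st15u y m ++ y m) <+: st15u y (m + 1) := st15u_append_prefix y m
    have hlt : Nf m + t < (st15u y m ++ y m).length := by
      simp only [List.length_append]; omega
    have h1 : (st15u y m ++ y m)[Nf m + t]'hlt = (y m)[t] := by
      rw [List.getElem_append_right (by omega)]
      congr 1
      omega
    have hlt2 : Nf m + t < (st15u y (m + 1)).length := lt_of_lt_of_le hlt hpre.length_le
    have h2 := hpre.getElem hlt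
    rw [← h1, h2]
    exact (hgetu (m + 1) _ hlt2).symm
  -- ## choice of n₀ and setup for a fixed n
  refine ⟨2 * k * L + 2 * L + k + L + 2, fun n hn => ?_⟩
  have hLn : L + 2 ≤ n := le_trans (by nlinarith) hn
  have hn1 : 1 ≤ n := by omega
  -- first step T with Nf T ≥ n
  have hTex : ∃ t, n ≤ Nf t := ⟨n, hNge n⟩
  set T := Nat.find hTex with hTdef
  have hT1 : n ≤ Nf T := Nat.find_spec hTex
  have hT0 : ∀ t, t < T → Nf t < n := by
    intro t ht
    have := Nat.find_min hTex ht
    omega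
  have hNT : Nf T ≤ 2 * n + 2 * L := by
    rcases Nat.eq_zero_or_pos T with h0 | h0
    · rw [h0] at hT1; omega
    · have hT' : T - 1 + 1 = T := by omega
      have h1 := hT0 (T - 1) (by omega)
      have h2 := hNsucc (T - 1)
      have h3 := hcle (T - 1)
      have h4 := hyL (T - 1)
      rw [hT'] at h2
      omega
  -- short steps: steps m ≥ T where the palindromic suffix is shorter than n
  set SS : Set ℕ := {m | T ≤ m ∧ Nf m + (y m).length < n + cf m} with hSS
  have hkey : ∀ p q, p < q → p ∈ SS → q ∈ SS → y p = y q → False := by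
    intro p q hpq hp hq hyy
    have hQ := st15_QL y hpq hyy
    have hq2 : Nf q + (y q).length < n + cf q := hq.2
    have hp1 : n ≤ Nf p := le_trans hT1 (hNmono T p hp.1)
    have hcfq : cf q = st15c (st15u y q ++ y q) := rfl
    have hNp : (st15u y p).length = Nf p := rfl
    have hNq : (st15u y q).length = Nf q := rfl
    omega
  have hinj : Set.InjOn y SS := by
    intro a ha b hb hab
    by_contra hne'
    rcases lt_or_gt_of_ne hne' with h | h
    · exact hkey a b h ha hb hab
    · exact hkey b a h hb ha hab.symm
  have hSSfin : SS.Finite :=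
    Set.Finite.of_finite_image
      (hfin.subset (by rintro _ ⟨m, hm, rfl⟩; exact hy m)) hinj
  set SSf := hSSfin.toFinset with hSSf
  have hSSmem : ∀ m, m ∈ SSf ↔ (T ≤ m ∧ Nf m + (y m).length < n + cf m) := by
    intro m
    rw [hSSf, Set.Finite.mem_toFinset]
    exact Iff.rfl
  have hSScard : SSf.card ≤ k := by
    have h1 : (SSf : Set ℕ) = SS := hSSfin.coe_toFinset
    have h2 : SSf.card = SS.ncard := by rw [← Set.ncard_coe_finset, h1]
    rw [h2]
    calc SS.ncard = (y '' SS).ncard := (Set.ncard_image_of_injOn hinj).symm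
      _ ≤ X.ncard := Set.ncard_le_ncard (by rintro _ ⟨m, hm, rfl⟩; exact hy m) hfin
  -- window mirror at level m (as words)
  have hmirm : ∀ m i, i + n ≤ Nf m → (st15win s i n).reverse = st15win s (Nf m - n - i) n :=
    fun m i hi => st15_mir (hmir m) hi
  -- ## the candidate finite set of factors
  set C1 : Finset (List A) := (Finset.range (Nf T - n + 1)).image (fun i => st15win s i n)
    with hC1
  set C2 : Finset (List A) := (Xf ×ˢ Finset.Icc 1 L).image
      (fun p => (st15win s 0 (n - p.2)).reverse ++ p.1.take p.2) with hC2
  set C3 : Finset (List A) := C2.image List.reverse with hC3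
  set C4 : Finset (List A) := SSf.biUnion (fun m =>
      (Finset.Ioo (Nf m + (y m).length - n) (cf m)).image (fun i => st15win s i n)) with hC4
  set SF : Finset (List A) := ((C1 ∪ C2) ∪ C3) ∪ C4 with hSF
  have hmemC1 : ∀ w, w ∈ C1 → w ∈ SF := fun w hw =>
    Finset.mem_union_left _ (Finset.mem_union_left _ (Finset.mem_union_left _ hw))
  have hmemC2 : ∀ w, w ∈ C2 → w ∈ SF := fun w hw =>
    Finset.mem_union_left _ (Finset.mem_union_left _ (Finset.mem_union_right _ hw))
  have hmemC3 : ∀ w, w ∈ C3 → w ∈ SF := fun w hw =>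
    Finset.mem_union_left _ (Finset.mem_union_right _ hw)
  have hmemC4 : ∀ w, w ∈ C4 → w ∈ SF := fun w hw => Finset.mem_union_right _ hw
  -- ## the ends-in-x identity
  have hEnd : ∀ m i, Nf m < i + n → i + n ≤ Nf m + (y m).length →
      st15win s i n ∈ C2 := by
    intro m i h1 h2
    have hxl := hyL m
    have hiN : i < Nf m := by omega
    have ht1 : 1 ≤ i + n - Nf m := by omega
    have ht2 : i + n - Nf m ≤ (y m).length := by omega
    have heq : st15win s i n
        = (st15win s 0 (n - (i + n - Nf m))).reverse ++ (y m).take (i + n - Nf m) := by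
      apply List.ext_getElem
      · simp only [st15win_length, List.length_append, List.length_reverse,
          List.length_take]
        omega
      · intro j hj1 hj2
        simp only [st15win_length] at hj1
        rw [st15win_getElem _ _ _ _ (by simpa using hj1)]
        rcases Nat.lt_or_ge j (n - (i + n - Nf m)) with hc | hc
        · rw [List.getElem_append_left (by simp; omega)]
          rw [List.getElem_reverse]
          rw [st15win_getElem _ _ _ _ (by simp; omega)]
          rw [hmir m (i + j) (by omega)]
          congr 1
          simp only [List.length_reverse, st15win_length]
          omega
        · rw [List.getElem_append_right (by simp; omega)]
          simp only [List.length_reverse, st15win_length, List.getElem_take]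
          rw [← hyx m (j - (n - (i + n - Nf m))) (by omega)]
          congr 1
          omega
    rw [heq, hC2]
    refine Finset.mem_image.mpr ⟨(y m, i + n - Nf m), ?_, rfl⟩
    rw [Finset.mem_product]
    exact ⟨hyXf m, Finset.mem_Icc.mpr ⟨ht1, by omega⟩⟩
  -- ## SF is closed under reversal
  have hRev : ∀ w, w ∈ SF → w.reverse ∈ SF := by
    intro w hw
    rw [hSF] at hw
    rcases Finset.mem_union.mp hw with hw | hw
    rcases Finset.mem_union.mp hw with hw | hw
    rcases Finset.mem_union.mp hw with hw | hw
    · -- C1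
      obtain ⟨i, hi, rfl⟩ := Finset.mem_image.mp hw
      rw [Finset.mem_range] at hi
      rw [hmirm T i (by omega)]
      apply hmemC1
      exact Finset.mem_image.mpr ⟨Nf T - n - i, Finset.mem_range.mpr (by omega), rfl⟩
    · -- C2
      apply hmemC3
      exact Finset.mem_image.mpr ⟨w, hw, rfl⟩
    · -- C3
      obtain ⟨v, hv, rfl⟩ := Finset.mem_image.mp hw
      rw [List.reverse_reverse]
      exact hmemC2 v hv
    · -- C4
      obtain ⟨m, hm, hw'⟩ := Finset.mem_biUnion.mp hw
      obtain ⟨i, hi, rfl⟩ := Finset.mem_image.mp hw'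
      rw [Finset.mem_Ioo] at hi
      have hmS := (hSSmem m).mp hm
      have hnNm : n ≤ Nf m := le_trans hT1 (hNmono _ _ hmS.1)
      have hcle' := hcle m
      have hNs := hNsucc m
      have hiub : i + n ≤ Nf (m + 1) := by omega
      rw [hmirm (m + 1) i hiub]
      apply hmemC4
      refine Finset.mem_biUnion.mpr ⟨m, hm, ?_⟩
      exact Finset.mem_image.mpr ⟨Nf (m + 1) - n - i, Finset.mem_Ioo.mpr ⟨by omega, by omega⟩, rfl⟩
  -- ## the grand induction: every window of u_m lies in SF
  have hGrand : ∀ m, T ≤ m → ∀ i, i + n ≤ Nf m → st15win s i n ∈ SF := by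
    intro m hTm
    induction m, hTm using Nat.le_induction with
    | base =>
      intro i hi
      apply hmemC1
      exact Finset.mem_image.mpr ⟨i, Finset.mem_range.mpr (by omega), rfl⟩
    | succ m hTm ih =>
      intro i hi
      have hnNm : n ≤ Nf m := le_trans hT1 (hNmono _ _ hTm)
      have hcle' := hcle m
      have hNs := hNsucc m
      have hxL := hyL m
      rcases Nat.lt_or_ge (Nf m + (y m).length) (i + n) with hbig | hsmall
      · -- window reaches beyond u_m ++ y m
        rcases Nat.lt_or_ge i (cf m) with hlt | hge
        · -- strictly centered window at a short step
          apply hmemC4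
          refine Finset.mem_biUnion.mpr ⟨m, (hSSmem m).mpr ⟨hTm, by omega⟩, ?_⟩
          exact Finset.mem_image.mpr ⟨i, Finset.mem_Ioo.mpr ⟨by omega, hlt⟩, rfl⟩
        · -- mirror lands inside u_m ++ y m
          have hrw : st15win s i n = (st15win s (Nf (m + 1) - n - i) n).reverse := by
            rw [hmirm (m + 1) (Nf (m + 1) - n - i) (by omega)]
            rw [show Nf (m + 1) - n - (Nf (m + 1) - n - i) = i by omega]
          rw [hrw]
          apply hRev
          rcases Nat.lt_or_ge (Nf m) (Nf (m + 1) - n - i + n) with h2 | h2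
          · exact hmemC2 _ (hEnd m (Nf (m + 1) - n - i) h2 (by omega))
          · exact ih (Nf (m + 1) - n - i) h2
      · -- window inside u_m ++ y m
        rcases Nat.lt_or_ge (Nf m) (i + n) with h2 | h2
        · exact hmemC2 _ (hEnd m i h2 hsmall)
        · exact ih i h2
  -- ## every factor of s of length n lies in SF
  have hsub : {u : List A | u.length = n ∧ FactorOfInf u s} ⊆ (SF : Set (List A)) := by
    rintro w ⟨hwl, i, hwf⟩
    have hw : w = st15win s i n := by
      apply List.ext_getElem (by simp [hwl])
      intro j hj1 hj2
      rw [st15win_getElem _ _ _ _ hj2]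
      have h := List.getElem_of_eq hwf hj1
      rw [List.getElem_ofFn] at h
      exact h
    have hm1 : T ≤ max T (i + n) := le_max_left _ _
    have hm2 : i + n ≤ Nf (max T (i + n)) := le_trans (le_max_right _ _) (hNge _)
    rw [hw]
    exact Finset.mem_coe.mpr (hGrand _ hm1 i hm2)
  -- ## complexity bound via card SF
  have hcomp : complexity s n ≤ SF.card := by
    have h1 := Set.ncard_le_ncard hsub SF.finite_toSet
    rw [Set.ncard_coe_finset] at h1
    exact h1
  have hC1c : C1.card ≤ Nf T - n + 1 := by
    rw [hC1]
    exact le_trans Finset.card_image_le (by simp)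
  have hC2c : C2.card ≤ k * L := by
    rw [hC2]
    refine le_trans Finset.card_image_le ?_
    rw [Finset.card_product, hkXf, Nat.card_Icc]
    have hLL : L + 1 - 1 = L := by omega
    rw [hLL]
  have hC3c : C3.card ≤ k * L := by
    rw [hC3]
    exact le_trans Finset.card_image_le hC2c
  have hC4c : C4.card ≤ k * n := by
    rw [hC4]
    refine le_trans Finset.card_biUnion_le ?_
    calc ∑ m ∈ SSf, ((Finset.Ioo (Nf m + (y m).length - n) (cf m)).image
          (fun i => st15win s i n)).card
        ≤ ∑ m ∈ SSf, n := by
          refine Finset.sum_le_sum fun m hm => ?_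
          refine le_trans Finset.card_image_le ?_
          rw [Nat.card_Ioo]
          have := hcle m
          omega
      _ = SSf.card * n := by rw [Finset.sum_const, smul_eq_mul]
      _ ≤ k * n := Nat.mul_le_mul_right n hSScard
  have hSFc : SF.card ≤ (Nf T - n + 1) + k * L + (k * L + k * n) := by
    rw [hSF]
    calc (((C1 ∪ C2) ∪ C3) ∪ C4).card ≤ ((C1 ∪ C2) ∪ C3).card + C4.card :=
          Finset.card_union_le _ _
      _ ≤ (C1 ∪ C2).card + C3.card + C4.card := by
          have := Finset.card_union_le (C1 ∪ C2) C3
          omega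
      _ ≤ C1.card + C2.card + C3.card + C4.card := by
          have := Finset.card_union_le C1 C2
          omega
      _ ≤ (Nf T - n + 1) + k * L + (k * L + k * n) := by omega
  -- ## final arithmetic
  have htot : complexity s n ≤ (Nf T - n + 1) + k * L + (k * L + k * n) :=
    le_trans hcomp hSFc
  have htot2 : complexity s n ≤ (n + 2 * L + 1) + k * L + (k * L + k * n) := by
    have h1 : Nf T - n + 1 ≤ n + 2 * L + 1 := by omega
    omega
  have hcast : (complexity s n : ℤ) ≤ (n : ℤ) + 2 * L + 1 + k * L + (k * L + k * n) := by
    exact_mod_cast htot2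
  have hnz : (n : ℤ) ≥ 2 * k * L + 2 * L + k + L + 2 := by exact_mod_cast hn
  have hk2z : (2 : ℤ) ≤ (k : ℤ) := by exact_mod_cast hk2
  have hmul : (1 : ℤ) * (n : ℤ) ≤ ((k : ℤ) - 1) * (n : ℤ) := by
    apply mul_le_mul_of_nonneg_right (by linarith) (by positivity)
  linarith
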